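/- (Exactness of the master integer program.) For every binary matrix X ∈ {0,1}^{n×m} and every positive integer k, the minimum objective value of MIP_exact equals the minimum of ‖X − A∘B‖²_F = Σ_{i,j} (x_{ij} − (A∘B)_{ij})² over all A ∈ {0,1}^{n×k} and B ∈ {0,1}^{k×m}. -/

import Mathlib

/-- The index set `E = {(i,j) : x_{ij} = 1}` of positive entries of `X`. -/
def Eset (n m : ℕ) (X : Fin n → Fin m → ℕ) : Finset (Fin n × Fin m) :=
  Finset.univ.filter fun p => X p.1 p.2 = 1

/-- The complement of `E`: indices `(i,j)` with `x_{ij} ≠ 1`. -/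
def Ecomp (n m : ℕ) (X : Fin n → Fin m → ℕ) : Finset (Fin n × Fin m) :=
  Finset.univ.filter fun p => X p.1 p.2 ≠ 1

/-- The set `R = {a bᵀ : a ∈ {0,1}^n \ {0}, b ∈ {0,1}^m \ {0}}` of all nonzero
rank-1 binary `n×m` matrices, as a `Finset` (each pair of nonzero binary vectors is
encoded by a pair of nonzero Boolean vectors). -/
def Rset (n m : ℕ) : Finset (Fin n → Fin m → ℕ) :=
  ((Finset.univ : Finset ((Fin n → Bool) × (Fin m → Bool))).filter
      fun p => p.1 ≠ (fun _ => false) ∧ p.2 ≠ (fun _ => false)).image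
    fun p => fun i j => (if p.1 i then 1 else 0) * (if p.2 j then 1 else 0)
/-- Feasibility for the master LP relaxation `MLP_exact`: variables `ξ_{ij} ≥ 0` for
`(i,j) ∈ E`, `π_{ij} ∈ [0,1]` for `(i,j) ∉ E`, `q_Y ∈ [0,1]` for `Y ∈ R`, subject to
`Σ_Y Y_{ij} q_Y + ξ_{ij} ≥ 1` for `(i,j) ∈ E`, `Σ_Y Y_{ij} q_Y ≤ k π_{ij}` for
`(i,j) ∉ E`, and `Σ_Y q_Y ≤ k`. -/
def MLPexactFeasible (n m k : ℕ) (X : Fin n → Fin m → ℕ)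
    (ξ π : Fin n → Fin m → ℝ) (q : (Fin n → Fin m → ℕ) → ℝ) : Prop :=
  (∀ i j, X i j = 1 → 0 ≤ ξ i j) ∧
  (∀ i j, X i j ≠ 1 → π i j ∈ Set.Icc (0 : ℝ) 1) ∧
  (∀ Y ∈ Rset n m, q Y ∈ Set.Icc (0 : ℝ) 1) ∧
  (∀ i j, X i j = 1 → 1 ≤ (∑ Y ∈ Rset n m, (Y i j : ℝ) * q Y) + ξ i j) ∧
  (∀ i j, X i j ≠ 1 → (∑ Y ∈ Rset n m, (Y i j : ℝ) * q Y) ≤ k * π i j) ∧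
  (∑ Y ∈ Rset n m, q Y) ≤ k

/-- The objective of `MLP_exact`: `Σ_{(i,j)∈E} ξ_{ij} + Σ_{(i,j)∉E} π_{ij}`. -/
def MLPexactObj (n m : ℕ) (X : Fin n → Fin m → ℕ) (ξ π : Fin n → Fin m → ℝ) : ℝ :=
  (∑ p ∈ Eset n m X, ξ p.1 p.2) + ∑ p ∈ Ecomp n m X, π p.1 p.2

/-- Feasibility for the master integer program `MIP_exact`: as in `MLP_exact` but with
`π_{ij} ∈ {0,1}` for `(i,j) ∉ E` and `q_Y ∈ {0,1}` for `Y ∈ R`. -/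
def MIPexactFeasible (n m k : ℕ) (X : Fin n → Fin m → ℕ)
    (ξ π : Fin n → Fin m → ℝ) (q : (Fin n → Fin m → ℕ) → ℝ) : Prop :=
  MLPexactFeasible n m k X ξ π q ∧
  (∀ i j, X i j ≠ 1 → (π i j = 0 ∨ π i j = 1)) ∧
  (∀ Y ∈ Rset n m, q Y = 0 ∨ q Y = 1)

lemma mem_Rset_iff {n m : ℕ} {Y : Fin n → Fin m → ℕ} :
    Y ∈ Rset n m ↔ ∃ a : Fin n → Bool, ∃ b : Fin m → Bool,
      a ≠ (fun _ => false) ∧ b ≠ (fun _ => false) ∧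
      Y = fun i j => (if a i then 1 else 0) * (if b j then 1 else 0) := by
  constructor
  · intro h
    simp only [Rset, Finset.mem_image, Finset.mem_filter, Finset.mem_univ, true_and] at h
    obtain ⟨p, ⟨h1, h2⟩, h3⟩ := h
    exact ⟨p.1, p.2, h1, h2, h3.symm⟩
  · rintro ⟨a, b, h1, h2, rfl⟩
    simp only [Rset, Finset.mem_image, Finset.mem_filter, Finset.mem_univ, true_and]
    exact ⟨(a, b), ⟨h1, h2⟩, rfl⟩

lemma Rset_binary {n m : ℕ} {Y : Fin n → Fin m → ℕ} (hY : Y ∈ Rset n m) (i : Fin n) (j : Fin m) :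
    Y i j = 0 ∨ Y i j = 1 := by
  obtain ⟨a, b, -, -, rfl⟩ := mem_Rset_iff.1 hY
  by_cases ha : a i <;> by_cases hb : b j <;> simp [ha, hb]

lemma sup_ind_eq_one {t : ℕ} {a : Fin t → Bool} (ha : a ≠ fun _ => false) :
    (Finset.univ.sup fun i => if a i then (1:ℕ) else 0) = 1 := by
  have : ∃ i, a i = true := by
    by_contra h
    push_neg at h
    exact ha (funext fun i => by simpa using h i)
  obtain ⟨i, hi⟩ := this
  refine le_antisymm (Finset.sup_le fun x _ => by split <;> simp) ?_
  calc (1:ℕ) = if a i then 1 else 0 := by simp [hi]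
    _ ≤ _ := Finset.le_sup (f := fun i => if a i then (1:ℕ) else 0) (Finset.mem_univ i)

lemma sup_binary {ι : Type*} [Fintype ι] {f : ι → ℕ} (hf : ∀ x, f x = 0 ∨ f x = 1) :
    Finset.univ.sup f = 0 ∨ Finset.univ.sup f = 1 := by
  have h1 : Finset.univ.sup f ≤ 1 :=
    Finset.sup_le fun x _ => by rcases hf x with h|h <;> simp [h]
  omega

lemma sup_eq_one_iff {ι : Type*} [Fintype ι] {f : ι → ℕ} (hf : ∀ x, f x = 0 ∨ f x = 1) :
    Finset.univ.sup f = 1 ↔ ∃ x, f x = 1 := by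
  constructor
  · intro h
    by_contra hc
    push_neg at hc
    have h0 : Finset.univ.sup f ≤ 0 := Finset.sup_le fun x _ => by
      rcases hf x with h0|h1
      · exact h0.le
      · exact absurd h1 (hc x)
    omega
  · rintro ⟨x, hx⟩
    refine le_antisymm (Finset.sup_le fun y _ => by rcases hf y with h|h <;> simp [h]) ?_
    exact hx ▸ Finset.le_sup (Finset.mem_univ x)

lemma Rset_decomp {n m : ℕ} {Y : Fin n → Fin m → ℕ} (hY : Y ∈ Rset n m) (i : Fin n) (j : Fin m) :
    Y i j = (Finset.univ.sup fun j' => Y i j') * (Finset.univ.sup fun i' => Y i' j) := by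
  obtain ⟨a, b, ha, hb, rfl⟩ := mem_Rset_iff.1 hY
  have hz : ∀ t : ℕ, (Finset.univ.sup fun _ : Fin t => (0:ℕ)) = 0 := fun t =>
    Nat.eq_zero_of_le_zero (Finset.sup_le fun _ _ => le_rfl)
  by_cases hai : a i <;> by_cases hbj : b j <;>
    simp [hai, hbj, sup_ind_eq_one ha, sup_ind_eq_one hb, hz]

lemma dir1 (n m k : ℕ) (X : Fin n → Fin m → ℕ)
    (hX : ∀ i j, X i j = 0 ∨ X i j = 1)
    (A : Fin n → Fin k → ℕ) (B : Fin k → Fin m → ℕ)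
    (hA : ∀ i ℓ, A i ℓ = 0 ∨ A i ℓ = 1) (hB : ∀ ℓ j, B ℓ j = 0 ∨ B ℓ j = 1) :
    ∃ ξ π q, MIPexactFeasible n m k X ξ π q ∧
      MLPexactObj n m X ξ π = ∑ i : Fin n, ∑ j : Fin m,
        ((X i j : ℝ) - ((Finset.univ.sup fun ℓ => A i ℓ * B ℓ j : ℕ) : ℝ)) ^ 2 := by
  classical
  set Z : Fin n → Fin m → ℕ := fun i j => Finset.univ.sup fun ℓ => A i ℓ * B ℓ j with hZdef
  have hZ01 : ∀ i j, Z i j = 0 ∨ Z i j = 1 := fun i j =>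
    sup_binary fun ℓ => by rcases hA i ℓ with h|h <;> rcases hB ℓ j with h'|h' <;> simp [h, h']
  set P : (Fin n → Fin m → ℕ) → Prop := fun Y => ∃ ℓ : Fin k, Y = fun i j => A i ℓ * B ℓ j
    with hPdef
  set F : Finset (Fin n → Fin m → ℕ) := (Rset n m).filter P with hFdef
  set q : (Fin n → Fin m → ℕ) → ℝ := fun Y => if P Y then 1 else 0 with hqdef
  set ξ : Fin n → Fin m → ℝ := fun i j => if Z i j = 1 then 0 else 1 with hξdef
  set π : Fin n → Fin m → ℝ := fun i j => if Z i j = 1 then 1 else 0 with hπdef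
  have hcard : F.card ≤ k := by
    have hsub : F ⊆ Finset.univ.image fun ℓ : Fin k => (fun i j => A i ℓ * B ℓ j) := by
      intro Y hY
      obtain ⟨ℓ, rfl⟩ := (Finset.mem_filter.1 hY).2
      exact Finset.mem_image_of_mem _ (Finset.mem_univ ℓ)
    calc F.card ≤ _ := Finset.card_le_card hsub
      _ ≤ (Finset.univ : Finset (Fin k)).card := Finset.card_image_le
      _ = k := by simp
  have hsumq : (∑ Y ∈ Rset n m, q Y) = (F.card : ℝ) := by
    rw [hqdef, Finset.sum_ite, Finset.sum_const, Finset.sum_const, hFdef]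
    simp
  have hsumY : ∀ i j, (∑ Y ∈ Rset n m, (Y i j : ℝ) * q Y) = ∑ Y ∈ F, (Y i j : ℝ) := by
    intro i j
    rw [hFdef, Finset.sum_filter]
    refine Finset.sum_congr rfl fun Y _ => ?_
    by_cases h : ∃ ℓ : Fin k, Y = fun i j => A i ℓ * B ℓ j <;>
      simp [hqdef, hPdef, h]
  have hcover : ∀ i j, Z i j = 1 → ∃ Y ∈ F, Y i j = 1 := by
    intro i j hz
    obtain ⟨ℓ, hℓ⟩ := (sup_eq_one_iff fun ℓ => by
      rcases hA i ℓ with h|h <;> rcases hB ℓ j with h'|h' <;> simp [h, h']).1 hz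
    refine ⟨fun i' j' => A i' ℓ * B ℓ j', Finset.mem_filter.2 ⟨?_, ⟨ℓ, rfl⟩⟩, hℓ⟩
    have hA1 : A i ℓ = 1 := by
      rcases hA i ℓ with h|h
      · rw [h, zero_mul] at hℓ; omega
      · exact h
    have hB1 : B ℓ j = 1 := by
      rcases hB ℓ j with h|h
      · rw [h, mul_zero] at hℓ; omega
      · exact h
    refine mem_Rset_iff.2 ⟨fun i' => A i' ℓ = 1, fun j' => B ℓ j' = 1, ?_, ?_, ?_⟩
    · intro hc
      have := congrFun hc i
      simp [hA1] at this
    · intro hc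
      have := congrFun hc j
      simp [hB1] at this
    · funext i' j'
      rcases hA i' ℓ with h|h <;> rcases hB ℓ j' with h'|h' <;> simp [h, h']
  have huncover : ∀ i j, Z i j = 0 → ∀ Y ∈ F, Y i j = 0 := by
    intro i j hz Y hY
    obtain ⟨ℓ, rfl⟩ := (Finset.mem_filter.1 hY).2
    have hle : A i ℓ * B ℓ j ≤ Z i j :=
      Finset.le_sup (f := fun ℓ => A i ℓ * B ℓ j) (Finset.mem_univ ℓ)
    show A i ℓ * B ℓ j = 0
    omega
  have hsum_nonneg : ∀ i j, (0:ℝ) ≤ ∑ Y ∈ F, (Y i j : ℝ) :=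
    fun i j => Finset.sum_nonneg fun Y _ => by positivity
  have hsum_le : ∀ i j, (∑ Y ∈ F, (Y i j : ℝ)) ≤ k := by
    intro i j
    calc (∑ Y ∈ F, (Y i j : ℝ)) ≤ ∑ Y ∈ F, 1 := Finset.sum_le_sum fun Y hY => by
          rcases Rset_binary (Finset.mem_filter.1 hY).1 i j with h|h <;> simp [h]
      _ = (F.card : ℝ) := by simp
      _ ≤ k := by exact_mod_cast hcard
  refine ⟨ξ, π, q, ⟨⟨?_, ?_, ?_, ?_, ?_, ?_⟩, ?_, ?_⟩, ?_⟩
  · intro i j _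
    rcases hZ01 i j with hz|hz <;> simp [hξdef, hz]
  · intro i j _
    rcases hZ01 i j with hz|hz <;> simp [hπdef, hz, Set.mem_Icc]
  · intro Y _
    by_cases h : ∃ ℓ : Fin k, Y = fun i j => A i ℓ * B ℓ j <;>
      simp [hqdef, hPdef, h, Set.mem_Icc]
  · intro i j hx
    rw [hsumY]
    rcases hZ01 i j with hz|hz
    · have : ξ i j = 1 := by simp [hξdef, hz]
      rw [this]
      linarith [hsum_nonneg i j]
    · obtain ⟨Y0, hY0F, hY01⟩ := hcover i j hz
      have h1 : (1:ℝ) ≤ ∑ Y ∈ F, (Y i j : ℝ) := by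
        calc (1:ℝ) = ((Y0 i j : ℕ) : ℝ) := by rw [hY01]; norm_num
          _ ≤ _ := Finset.single_le_sum (f := fun Y => ((Y i j : ℕ) : ℝ))
              (fun Y _ => by positivity) hY0F
      have hξ0 : (0:ℝ) ≤ ξ i j := by simp [hξdef, hz]
      linarith
  · intro i j hx
    rw [hsumY]
    rcases hZ01 i j with hz|hz
    · have : ∑ Y ∈ F, (Y i j : ℝ) = 0 :=
        Finset.sum_eq_zero fun Y hY => by rw [huncover i j hz Y hY]; norm_num
      rw [this]
      positivity
    · have : π i j = 1 := by simp [hπdef, hz]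
      rw [this, mul_one]
      exact hsum_le i j
  · rw [hsumq]
    exact_mod_cast hcard
  · intro i j _
    rcases hZ01 i j with hz|hz <;> simp [hπdef, hz]
  · intro Y _
    by_cases h : ∃ ℓ : Fin k, Y = fun i j => A i ℓ * B ℓ j <;>
      simp [hqdef, hPdef, h]
  · -- objective equality
    have hpoint : ∀ p : Fin n × Fin m,
        ((X p.1 p.2 : ℝ) - (Z p.1 p.2 : ℝ)) ^ 2 =
          if X p.1 p.2 = 1 then ξ p.1 p.2 else π p.1 p.2 := by
      rintro ⟨i, j⟩
      rcases hX i j with hx|hx <;> rcases hZ01 i j with hz|hz <;>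
        simp [hx, hz, hξdef, hπdef]
    calc MLPexactObj n m X ξ π
        = ∑ p ∈ Finset.univ.filter (fun p : Fin n × Fin m => X p.1 p.2 = 1),
            (if X p.1 p.2 = 1 then ξ p.1 p.2 else π p.1 p.2) +
          ∑ p ∈ Finset.univ.filter (fun p : Fin n × Fin m => ¬ X p.1 p.2 = 1),
            (if X p.1 p.2 = 1 then ξ p.1 p.2 else π p.1 p.2) := by
          unfold MLPexactObj Eset Ecomp
          congr 1
          · exact Finset.sum_congr rfl fun p hp => by
              simp [(Finset.mem_filter.1 hp).2]
          · exact Finset.sum_congr rfl fun p hp => by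
              simp [(Finset.mem_filter.1 hp).2]
      _ = ∑ p : Fin n × Fin m, (if X p.1 p.2 = 1 then ξ p.1 p.2 else π p.1 p.2) :=
          Finset.sum_filter_add_sum_filter_not _ _ _
      _ = ∑ p : Fin n × Fin m, ((X p.1 p.2 : ℝ) - (Z p.1 p.2 : ℝ)) ^ 2 := by
          exact Finset.sum_congr rfl fun p _ => (hpoint p).symm
      _ = ∑ i : Fin n, ∑ j : Fin m, ((X i j : ℝ) - (Z i j : ℝ)) ^ 2 := by
          rw [← Finset.univ_product_univ, Finset.sum_product]

lemma dir2 (n m k : ℕ) (X : Fin n → Fin m → ℕ)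
    (hX : ∀ i j, X i j = 0 ∨ X i j = 1)
    (ξ π : Fin n → Fin m → ℝ) (q : (Fin n → Fin m → ℕ) → ℝ)
    (hfeas : MIPexactFeasible n m k X ξ π q) :
    ∃ (A : Fin n → Fin k → ℕ) (B : Fin k → Fin m → ℕ),
      (∀ i ℓ, A i ℓ = 0 ∨ A i ℓ = 1) ∧ (∀ ℓ j, B ℓ j = 0 ∨ B ℓ j = 1) ∧
      (∑ i : Fin n, ∑ j : Fin m,
          ((X i j : ℝ) - ((Finset.univ.sup fun ℓ => A i ℓ * B ℓ j : ℕ) : ℝ)) ^ 2)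
        ≤ MLPexactObj n m X ξ π := by
  classical
  obtain ⟨⟨hξ0, hπI, hqI, hcov, hπc, hqs⟩, hπ01, hq01⟩ := hfeas
  set F : Finset (Fin n → Fin m → ℕ) := (Rset n m).filter (fun Y => q Y = 1) with hFdef
  have hFsub : F ⊆ Rset n m := Finset.filter_subset _ _
  have hcard : F.card ≤ k := by
    have h1 : (F.card : ℝ) ≤ ∑ Y ∈ Rset n m, q Y := by
      calc (F.card : ℝ) = ∑ _Y ∈ F, 1 := by simp
        _ = ∑ Y ∈ F, q Y := Finset.sum_congr rfl fun Y hY =>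
            ((Finset.mem_filter.1 hY).2).symm
        _ ≤ ∑ Y ∈ Rset n m, q Y := Finset.sum_le_sum_of_subset_of_nonneg hFsub
            (fun Y hY _ => (hqI Y hY).1)
    have h2 := h1.trans hqs
    exact_mod_cast h2
  set L := F.toList with hLdef
  have hlen : L.length = F.card := Finset.length_toList F
  have hlenk : L.length ≤ k := hlen ▸ hcard
  have hmemL : ∀ idx : Fin L.length, L.get idx ∈ F := fun idx => by
    exact Finset.mem_toList.1 (List.get_mem _ idx)
  set A : Fin n → Fin k → ℕ := fun i ℓ =>
    if h : (ℓ : ℕ) < L.length then Finset.univ.sup (fun j => L.get ⟨ℓ, h⟩ i j) else 0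
    with hAdef
  set B : Fin k → Fin m → ℕ := fun ℓ j =>
    if h : (ℓ : ℕ) < L.length then Finset.univ.sup (fun i => L.get ⟨ℓ, h⟩ i j) else 0
    with hBdef
  have hA : ∀ i ℓ, A i ℓ = 0 ∨ A i ℓ = 1 := by
    intro i ℓ
    simp only [hAdef]
    by_cases h : (ℓ : ℕ) < L.length
    · rw [dif_pos h]
      exact sup_binary fun j => Rset_binary (hFsub (hmemL ⟨ℓ, h⟩)) i j
    · rw [dif_neg h]; exact Or.inl rfl
  have hB : ∀ ℓ j, B ℓ j = 0 ∨ B ℓ j = 1 := by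
    intro ℓ j
    simp only [hBdef]
    by_cases h : (ℓ : ℕ) < L.length
    · rw [dif_pos h]
      exact sup_binary fun i => Rset_binary (hFsub (hmemL ⟨ℓ, h⟩)) i j
    · rw [dif_neg h]; exact Or.inl rfl
  have hAB : ∀ (i : Fin n) (j : Fin m) (ℓ : Fin k),
      A i ℓ * B ℓ j = if h : (ℓ : ℕ) < L.length then L.get ⟨ℓ, h⟩ i j else 0 := by
    intro i j ℓ
    simp only [hAdef, hBdef]
    by_cases h : (ℓ : ℕ) < L.length
    · rw [dif_pos h, dif_pos h, dif_pos h]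
      exact (Rset_decomp (hFsub (hmemL ⟨ℓ, h⟩)) i j).symm
    · rw [dif_neg h, dif_neg h, dif_neg h, zero_mul]
  set Z : Fin n → Fin m → ℕ := fun i j => Finset.univ.sup fun ℓ => A i ℓ * B ℓ j with hZdef
  have hABbin : ∀ i j (ℓ : Fin k), A i ℓ * B ℓ j = 0 ∨ A i ℓ * B ℓ j = 1 := by
    intro i j ℓ
    rcases hA i ℓ with h|h <;> rcases hB ℓ j with h'|h' <;> simp [h, h']
  have hZ01 : ∀ i j, Z i j = 0 ∨ Z i j = 1 := fun i j => sup_binary (hABbin i j)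
  have hZiff : ∀ i j, Z i j = 1 ↔ ∃ Y ∈ F, Y i j = 1 := by
    intro i j
    rw [hZdef]
    rw [sup_eq_one_iff (hABbin i j)]
    constructor
    · rintro ⟨ℓ, hℓ⟩
      rw [hAB] at hℓ
      by_cases h : (ℓ : ℕ) < L.length
      · rw [dif_pos h] at hℓ
        exact ⟨L.get ⟨ℓ, h⟩, hmemL ⟨ℓ, h⟩, hℓ⟩
      · rw [dif_neg h] at hℓ; omega
    · rintro ⟨Y, hYF, hY1⟩
      have hYL : Y ∈ L := Finset.mem_toList.2 hYF
      obtain ⟨idx, hidx⟩ := List.mem_iff_get.1 hYL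
      refine ⟨⟨idx.1, lt_of_lt_of_le idx.2 hlenk⟩, ?_⟩
      rw [hAB, dif_pos idx.2]
      have : (⟨idx.1, idx.2⟩ : Fin L.length) = idx := rfl
      rw [this, hidx]
      exact hY1
  -- the Rset sum at (i,j) equals the sum over F
  have hsum_zero : ∀ i j, Z i j = 0 → (∑ Y ∈ Rset n m, (Y i j : ℝ) * q Y) = 0 := by
    intro i j hz
    refine Finset.sum_eq_zero fun Y hY => ?_
    rcases hq01 Y hY with h0|h1
    · rw [h0, mul_zero]
    · have hYF : Y ∈ F := Finset.mem_filter.2 ⟨hY, h1⟩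
      have hY0 : Y i j = 0 := by
        rcases Rset_binary hY i j with h|h
        · exact h
        · exact absurd ((hZiff i j).2 ⟨Y, hYF, h⟩) (by omega)
      rw [hY0]; norm_num
  have key1 : ∀ i j, X i j = 1 → Z i j = 0 → 1 ≤ ξ i j := by
    intro i j hx hz
    have := hcov i j hx
    rw [hsum_zero i j hz, zero_add] at this
    exact this
  have key2 : ∀ i j, X i j ≠ 1 → Z i j = 1 → π i j = 1 := by
    intro i j hx hz
    obtain ⟨Y0, hY0F, hY01⟩ := (hZiff i j).1 hz
    have hq1 : q Y0 = 1 := (Finset.mem_filter.1 hY0F).2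
    have h1 : (1:ℝ) ≤ ∑ Y ∈ Rset n m, (Y i j : ℝ) * q Y := by
      calc (1:ℝ) = (Y0 i j : ℝ) * q Y0 := by rw [hY01, hq1]; norm_num
        _ ≤ _ := Finset.single_le_sum (f := fun Y => (Y i j : ℝ) * q Y)
            (fun Y hY => mul_nonneg (by positivity) (hqI Y hY).1) (hFsub hY0F)
    have h2 := h1.trans (hπc i j hx)
    rcases hπ01 i j hx with h|h
    · rw [h, mul_zero] at h2; linarith
    · exact h
  refine ⟨A, B, hA, hB, ?_⟩
  calc (∑ i : Fin n, ∑ j : Fin m, ((X i j : ℝ) - (Z i j : ℝ)) ^ 2)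
      = ∑ p : Fin n × Fin m, ((X p.1 p.2 : ℝ) - (Z p.1 p.2 : ℝ)) ^ 2 := by
        rw [← Finset.univ_product_univ, Finset.sum_product]
    _ = ∑ p ∈ Eset n m X, ((X p.1 p.2 : ℝ) - (Z p.1 p.2 : ℝ)) ^ 2 +
        ∑ p ∈ Ecomp n m X, ((X p.1 p.2 : ℝ) - (Z p.1 p.2 : ℝ)) ^ 2 := by
        rw [Eset, Ecomp]
        exact (Finset.sum_filter_add_sum_filter_not _ _ _).symm
    _ ≤ (∑ p ∈ Eset n m X, ξ p.1 p.2) + ∑ p ∈ Ecomp n m X, π p.1 p.2 := by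
        refine add_le_add (Finset.sum_le_sum fun p hp => ?_)
          (Finset.sum_le_sum fun p hp => ?_)
        · have hx : X p.1 p.2 = 1 := (Finset.mem_filter.1 hp).2
          rcases hZ01 p.1 p.2 with hz|hz
          · have := key1 p.1 p.2 hx hz
            rw [hx, hz]
            norm_num
            linarith
          · rw [hx, hz]
            norm_num
            exact hξ0 p.1 p.2 hx
        · have hx : X p.1 p.2 ≠ 1 := (Finset.mem_filter.1 hp).2
          have hx0 : X p.1 p.2 = 0 := (hX p.1 p.2).resolve_right hx
          rcases hZ01 p.1 p.2 with hz|hz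
          · rw [hx0, hz]
            norm_num
            exact (hπI p.1 p.2 hx).1
          · rw [hx0, hz, key2 p.1 p.2 hx hz]
            norm_num
    _ = MLPexactObj n m X ξ π := rfl

/-- exactness of the master integer program: For every binary matrix
`X ∈ {0,1}^{n×m}` and every positive integer `k`, the minimum objective value of
`MIP_exact` equals the minimum of `‖X − A∘B‖²_F = Σ_{i,j} (x_{ij} − (A∘B)_{ij})²` over
all binary `A ∈ {0,1}^{n×k}`, `B ∈ {0,1}^{k×m}`, where
`(A∘B)_{ij} = max_ℓ a_{iℓ} b_{ℓj}` is the Boolean product. -/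
theorem stmt_13 (n m k : ℕ) (hk : 0 < k) (X : Fin n → Fin m → ℕ)
    (hX : ∀ i j, X i j = 0 ∨ X i j = 1) :
    sInf {v : ℝ | ∃ (ξ π : Fin n → Fin m → ℝ) (q : (Fin n → Fin m → ℕ) → ℝ),
        MIPexactFeasible n m k X ξ π q ∧ v = MLPexactObj n m X ξ π} =
      sInf {v : ℝ | ∃ (A : Fin n → Fin k → ℕ) (B : Fin k → Fin m → ℕ),
        (∀ i ℓ, A i ℓ = 0 ∨ A i ℓ = 1) ∧ (∀ ℓ j, B ℓ j = 0 ∨ B ℓ j = 1) ∧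
        v = ∑ i : Fin n, ∑ j : Fin m,
          ((X i j : ℝ) - ((Finset.univ.sup fun ℓ => A i ℓ * B ℓ j : ℕ) : ℝ)) ^ 2} := by
  classical
  set S1 : Set ℝ := {v : ℝ | ∃ (ξ π : Fin n → Fin m → ℝ) (q : (Fin n → Fin m → ℕ) → ℝ),
      MIPexactFeasible n m k X ξ π q ∧ v = MLPexactObj n m X ξ π} with hS1
  set S2 : Set ℝ := {v : ℝ | ∃ (A : Fin n → Fin k → ℕ) (B : Fin k → Fin m → ℕ),
      (∀ i ℓ, A i ℓ = 0 ∨ A i ℓ = 1) ∧ (∀ ℓ j, B ℓ j = 0 ∨ B ℓ j = 1) ∧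
      v = ∑ i : Fin n, ∑ j : Fin m,
        ((X i j : ℝ) - ((Finset.univ.sup fun ℓ => A i ℓ * B ℓ j : ℕ) : ℝ)) ^ 2} with hS2
  have hbdd1 : BddBelow S1 := by
    refine ⟨0, ?_⟩
    rintro v ⟨ξ, π, q, ⟨⟨hξ0, hπI, -, -, -, -⟩, -, -⟩, rfl⟩
    unfold MLPexactObj
    apply add_nonneg
    · exact Finset.sum_nonneg fun p hp => hξ0 p.1 p.2 (Finset.mem_filter.1 hp).2
    · exact Finset.sum_nonneg fun p hp => (hπI p.1 p.2 (Finset.mem_filter.1 hp).2).1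
  have hbdd2 : BddBelow S2 := by
    refine ⟨0, ?_⟩
    rintro v ⟨A, B, -, -, rfl⟩
    positivity
  have hS2ne : S2.Nonempty :=
    ⟨_, fun _ _ => 0, fun _ _ => 0, fun _ _ => Or.inl rfl, fun _ _ => Or.inl rfl, rfl⟩
  have hS1ne : S1.Nonempty := by
    obtain ⟨ξ, π, q, hfeas, -⟩ := dir1 n m k X hX (fun _ _ => 0) (fun _ _ => 0)
      (fun _ _ => Or.inl rfl) (fun _ _ => Or.inl rfl)
    exact ⟨MLPexactObj n m X ξ π, ξ, π, q, hfeas, rfl⟩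
  apply le_antisymm
  · refine le_csInf hS2ne ?_
    rintro v ⟨A, B, hA, hB, rfl⟩
    obtain ⟨ξ, π, q, hfeas, hobj⟩ := dir1 n m k X hX A B hA hB
    calc sInf S1 ≤ MLPexactObj n m X ξ π := csInf_le hbdd1 ⟨ξ, π, q, hfeas, rfl⟩
      _ = _ := hobj
  · refine le_csInf hS1ne ?_
    rintro v ⟨ξ, π, q, hfeas, rfl⟩
    obtain ⟨A, B, hA, hB, hle⟩ := dir2 n m k X hX ξ π q hfeas
    exact le_trans (csInf_le hbdd2 ⟨A, B, hA, hB, rfl⟩) hle
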